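/- Suppose 0 < ε, δ < 1/6, n ≥ m, and P is an ε-dense m×n partial latin rectangle. Let A₁,...,A_n ⊆ [n] with |A_j| < δm for each j and each symbol k belonging to fewer than δm of the sets A_j. Then P is contained in a 3(δ+ε)-dense m×n partial latin rectangle P′ such that for each j, column j of P′ contains all elements of A_j. -/

import Mathlib

open Finset

section LatinAux

variable {m n : ℕ}

private def colN (Q : Fin m → Fin n → Option (Fin n)) (j : Fin n) : ℕ :=
  (univ.filter fun i => Q i j ≠ none).card

private def rowN (Q : Fin m → Fin n → Option (Fin n)) (i : Fin m) : ℕ :=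
  (univ.filter fun j => Q i j ≠ none).card

private def symN (Q : Fin m → Fin n → Option (Fin n)) (k : Fin n) : ℕ :=
  (univ.filter fun p : Fin m × Fin n => Q p.1 p.2 = some k).card

private def cntj (L : List (Fin n × Fin n)) (j : Fin n) : ℕ :=
  L.countP fun p => decide (p.1 = j)

private def cntk (L : List (Fin n × Fin n)) (k : Fin n) : ℕ :=
  L.countP fun p => decide (p.2 = k)

private lemma cntj_cons (a : Fin n × Fin n) (L : List (Fin n × Fin n)) (j : Fin n) :
    cntj (a :: L) j = cntj L j + if a.1 = j then 1 else 0 := by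
  simp [cntj, List.countP_cons]

private lemma cntk_cons (a : Fin n × Fin n) (L : List (Fin n × Fin n)) (k : Fin n) :
    cntk (a :: L) k = cntk L k + if a.2 = k then 1 else 0 := by
  simp [cntk, List.countP_cons]

private lemma sum_cntj (L : List (Fin n × Fin n)) : ∑ j : Fin n, cntj L j = L.length := by
  induction L with
  | nil => simp [cntj]
  | cons a L ih =>
    simp only [cntj_cons, Finset.sum_add_distrib, ih]
    rw [Finset.sum_ite_eq univ a.1 (fun _ => 1)]
    simp

private lemma countP_toList {α : Type*} [DecidableEq α] (s : Finset α) (p : α → Prop)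
    [DecidablePred p] : s.toList.countP (fun a => decide (p a)) = (s.filter p).card := by
  have h2 := Multiset.coe_countP (p := p) s.toList
  rw [s.coe_toList] at h2
  rw [← h2, Multiset.countP_eq_card_filter]
  rfl

private lemma filter_card_succ {α : Type*} [Fintype α] [DecidableEq α]
    (p q : α → Prop) [DecidablePred p] [DecidablePred q] (a : α)
    (h : ∀ x, x ≠ a → (p x ↔ q x)) (hpa : p a) (hqa : ¬ q a) :
    (univ.filter p).card = (univ.filter q).card + 1 := by
  have hset : univ.filter p = insert a (univ.filter q) := by
    ext x
    by_cases hx : x = a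
    · subst hx; simp [hpa]
    · simp [hx, h x hx]
  rw [hset, Finset.card_insert_of_notMem (by simp [hqa])]

private lemma sum_rowN_eq (Q : Fin m → Fin n → Option (Fin n)) :
    ∑ i, rowN Q i = ∑ j, colN Q j := by
  simp only [rowN, colN, Finset.card_filter]
  exact Finset.sum_comm

private lemma rows_le_symN (Q : Fin m → Fin n → Option (Fin n)) (k : Fin n) :
    (univ.filter fun i : Fin m => ∃ j, Q i j = some k).card ≤ symN Q k := by
  classical
  rw [symN, Finset.card_filter, Finset.card_filter, Fintype.sum_prod_type]
  apply Finset.sum_le_sum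
  intro i _
  by_cases h : ∃ j, Q i j = some k
  · obtain ⟨j₀, hj₀⟩ := h
    rw [if_pos ⟨j₀, hj₀⟩]
    have := Finset.single_le_sum (f := fun j => if Q i j = some k then (1:ℕ) else 0)
      (fun _ _ => Nat.zero_le _) (Finset.mem_univ j₀)
    simpa [hj₀] using this
  · simp [h]

end LatinAux

private lemma latin_aux (m n : ℕ) (hmn : m ≤ n) (ε δ : ℝ)
    (hε : 0 < ε) (hε' : ε < 1 / 6) (hδ : 0 < δ) (hδ' : δ < 1 / 6)
    (A : Fin n → Finset (Fin n))
    (hA : ∀ j, ((A j).card : ℝ) < δ * m)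
    (hA' : ∀ k, ((univ.filter fun j => k ∈ A j).card : ℝ) < δ * m)
    (L : List (Fin n × Fin n)) (hL : ∀ p ∈ L, p.2 ∈ A p.1)
    (Q : Fin m → Fin n → Option (Fin n))
    (hQrow : ∀ i j₁ j₂ k, Q i j₁ = some k → Q i j₂ = some k → j₁ = j₂)
    (hQcol : ∀ i₁ i₂ j k, Q i₁ j = some k → Q i₂ j = some k → i₁ = i₂)
    (Hcol : ∀ j, (colN Q j : ℝ) + cntj L j ≤ ε * m + (A j).card)
    (Hsym : ∀ k, (symN Q k : ℝ) + cntk L k ≤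
      ε * m + (univ.filter fun j => k ∈ A j).card)
    (Hrow : ∀ i, (rowN Q i : ℝ) ≤ 3 * (δ + ε) * n) :
    ∃ Q' : Fin m → Fin n → Option (Fin n),
      (∀ i j₁ j₂ k, Q' i j₁ = some k → Q' i j₂ = some k → j₁ = j₂) ∧
      (∀ i₁ i₂ j k, Q' i₁ j = some k → Q' i₂ j = some k → i₁ = i₂) ∧
      (∀ i j k, Q i j = some k → Q' i j = some k) ∧
      (∀ i, (rowN Q' i : ℝ) ≤ 3 * (δ + ε) * n) ∧
      (∀ j, (colN Q' j : ℝ) ≤ 3 * (δ + ε) * m) ∧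
      (∀ k, (symN Q' k : ℝ) ≤ 3 * (δ + ε) * m) ∧
      (∀ p ∈ L, ∃ i, Q' i p.1 = some p.2) := by
  classical
  induction L generalizing Q with
  | nil =>
    refine ⟨Q, hQrow, hQcol, fun _ _ _ h => h, Hrow, ?_, ?_, by simp⟩
    · intro j
      have h1 := Hcol j
      have h2 := hA j
      have hm0 : (0:ℝ) ≤ (m:ℝ) := Nat.cast_nonneg m
      simp only [cntj, List.countP_nil, Nat.cast_zero, add_zero] at h1
      nlinarith
    · intro k
      have h1 := Hsym k
      have h2 := hA' k
      have hm0 : (0:ℝ) ≤ (m:ℝ) := Nat.cast_nonneg m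
      simp only [cntk, List.countP_nil, Nat.cast_zero, add_zero] at h1
      nlinarith
  | cons hd tl ih =>
    obtain ⟨j, k⟩ := hd
    have hLtl : ∀ p ∈ tl, p.2 ∈ A p.1 := fun p hp => hL p (List.mem_cons_of_mem _ hp)
    by_cases hex : ∃ i, Q i j = some k
    · -- the symbol is already in the column: skip this pair
      have Hcol' : ∀ j', (colN Q j' : ℝ) + cntj tl j' ≤ ε * m + (A j').card := by
        intro j'
        have h1 := Hcol j'
        have h2 : cntj tl j' ≤ cntj ((j,k)::tl) j' := by rw [cntj_cons]; omega
        have h2' : (cntj tl j' : ℝ) ≤ (cntj ((j,k)::tl) j' : ℝ) := by exact_mod_cast h2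
        linarith
      have Hsym' : ∀ k', (symN Q k' : ℝ) + cntk tl k' ≤
          ε * m + (univ.filter fun j' => k' ∈ A j').card := by
        intro k'
        have h1 := Hsym k'
        have h2 : cntk tl k' ≤ cntk ((j,k)::tl) k' := by rw [cntk_cons]; omega
        have h2' : (cntk tl k' : ℝ) ≤ (cntk ((j,k)::tl) k' : ℝ) := by exact_mod_cast h2
        linarith
      obtain ⟨Q', a1, a2, a3, a4, a5, a6, a7⟩ := ih hLtl Q hQrow hQcol Hcol' Hsym' Hrow
      refine ⟨Q', a1, a2, a3, a4, a5, a6, ?_⟩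
      intro p hp
      rcases List.mem_cons.1 hp with rfl | h
      · obtain ⟨i, hi⟩ := hex
        exact ⟨i, a3 _ _ _ hi⟩
      · exact a7 p h
    · -- place symbol k in a good row of column j
      have hkAj : k ∈ A j := hL (j,k) List.mem_cons_self
      have hδm : (1:ℝ) < δ * m := by
        have h1 : (1:ℝ) ≤ (A j).card := by
          exact_mod_cast Finset.card_pos.2 ⟨k, hkAj⟩
        linarith [hA j]
      have hm0 : (0:ℝ) ≤ (m:ℝ) := Nat.cast_nonneg m
      have hn0 : (0:ℝ) ≤ (n:ℝ) := Nat.cast_nonneg n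
      have hmn' : (m:ℝ) ≤ (n:ℝ) := Nat.cast_le.2 hmn
      have hm1 : (1:ℝ) ≤ (m:ℝ) := by nlinarith
      have hc0 : (0:ℝ) < δ + ε := by linarith
      have hc3 : δ + ε < 1/3 := by linarith
      have hcm : (1:ℝ) < (δ+ε) * m := by nlinarith
      have hcn : (1:ℝ) < (δ+ε) * n := by nlinarith
      set bad1 : Finset (Fin m) := univ.filter (fun i => Q i j ≠ none) with hbad1
      set bad2 : Finset (Fin m) := univ.filter (fun i => ∃ j', Q i j' = some k) with hbad2
      set bad3 : Finset (Fin m) :=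
        univ.filter (fun i => (3*(δ+ε)*n - 1 : ℝ) < rowN Q i) with hbad3
      have hb1 : (bad1.card : ℝ) ≤ ε * m + (A j).card - 1 := by
        have h1 := Hcol j
        have h2 : (1:ℕ) ≤ cntj ((j,k)::tl) j := by rw [cntj_cons]; simp
        have h2' : (1:ℝ) ≤ (cntj ((j,k)::tl) j : ℝ) := by exact_mod_cast h2
        have h3 : bad1.card = colN Q j := rfl
        rw [h3]; linarith
      have hb2 : (bad2.card : ℝ) ≤ ε * m + ((univ.filter fun j' => k ∈ A j').card : ℝ) - 1 := by
        have h1 := Hsym k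
        have h2 : (1:ℕ) ≤ cntk ((j,k)::tl) k := by rw [cntk_cons]; simp
        have h2' : (1:ℝ) ≤ (cntk ((j,k)::tl) k : ℝ) := by exact_mod_cast h2
        have h3 : (bad2.card : ℝ) ≤ (symN Q k : ℝ) := by exact_mod_cast rows_le_symN Q k
        linarith
      have hpos : (0:ℝ) < 3*(δ+ε)*n - 1 := by nlinarith
      have hb3 : (bad3.card : ℝ) * (3*(δ+ε)*n - 1) ≤ (δ+ε) * (m*n) - 1 := by
        have hstep1 : (bad3.card : ℝ) * (3*(δ+ε)*n - 1) ≤ ∑ i ∈ bad3, (rowN Q i : ℝ) := by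
          have h := Finset.card_nsmul_le_sum bad3 (fun i => (rowN Q i : ℝ)) (3*(δ+ε)*n - 1)
            (fun i hi => le_of_lt (Finset.mem_filter.1 hi).2)
          simpa [nsmul_eq_mul] using h
        have hstep2 : ∑ i ∈ bad3, (rowN Q i : ℝ) ≤ ∑ i, (rowN Q i : ℝ) :=
          Finset.sum_le_sum_of_subset_of_nonneg (Finset.subset_univ _)
            (fun _ _ _ => Nat.cast_nonneg _)
        have hstep3 : (∑ i, (rowN Q i : ℝ)) = ∑ j', (colN Q j' : ℝ) := by
          exact_mod_cast congrArg (Nat.cast : ℕ → ℝ) (sum_rowN_eq Q)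
        have hstep4 : (∑ j', (colN Q j' : ℝ)) + (∑ j', (cntj ((j,k)::tl) j' : ℝ)) ≤
            ε*m*n + ∑ j', ((A j').card : ℝ) := by
          have h := Finset.sum_le_sum (fun j' (_ : j' ∈ (univ : Finset (Fin n))) => Hcol j')
          rw [Finset.sum_add_distrib, Finset.sum_add_distrib, Finset.sum_const,
            Finset.card_univ, Fintype.card_fin, nsmul_eq_mul] at h
          calc (∑ j', (colN Q j' : ℝ)) + (∑ j', (cntj ((j,k)::tl) j' : ℝ))
              ≤ (n:ℝ) * (ε * m) + ∑ j', ((A j').card : ℝ) := h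
            _ = ε*m*n + ∑ j', ((A j').card : ℝ) := by ring_nf
        have hlen : (1:ℝ) ≤ ∑ j', (cntj ((j,k)::tl) j' : ℝ) := by
          have h := sum_cntj ((j,k)::tl)
          have h2 : (1:ℕ) ≤ ∑ j', cntj ((j,k)::tl) j' := by rw [h]; simp
          have h3 : ((∑ j', cntj ((j,k)::tl) j' : ℕ) : ℝ) = ∑ j', (cntj ((j,k)::tl) j' : ℝ) := by
            push_cast; rfl
          calc (1:ℝ) ≤ ((∑ j', cntj ((j,k)::tl) j' : ℕ) : ℝ) := by exact_mod_cast h2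
            _ = _ := h3
        have hS : ∑ j', ((A j').card : ℝ) < δ * m * n := by
          have h0 := Finset.sum_lt_sum_of_nonempty
            (⟨j, Finset.mem_univ j⟩ : (univ : Finset (Fin n)).Nonempty) (fun j' _ => hA j')
          rw [Finset.sum_const, Finset.card_univ, Fintype.card_fin, nsmul_eq_mul] at h0
          have : (n:ℝ) * (δ*m) = δ*m*n := by ring
          linarith
        have hgoal : (δ+ε) * (m*n) = ε*m*n + δ*m*n := by ring
        linarith
      have hkey : (δ+ε)*((m:ℝ)*n) - 1 ≤ ((1 - 2*(δ+ε))*m + 2) * (3*(δ+ε)*n - 1) := by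
        have t1 : (0:ℝ) ≤ (2*(1-3*(δ+ε))*m) * ((δ+ε)*n - 1) :=
          mul_nonneg (mul_nonneg (by linarith) hm0) (by linarith)
        have t2 : (δ+ε)*(m:ℝ) ≤ (δ+ε)*n := mul_le_mul_of_nonneg_left hmn' hc0.le
        linarith [t1, t2, hcm, hm1]
      have hbad3 : (bad3.card : ℝ) ≤ (1 - 2*(δ+ε))*m + 2 :=
        le_of_mul_le_mul_right (by linarith) hpos
      have hfinal : (bad1.card : ℝ) + bad2.card + bad3.card < m := by
        have hj := hA j
        have hk := hA' k
        linarith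
      obtain ⟨i₀, hi₀⟩ : ∃ i₀ : Fin m, i₀ ∉ bad1 ∪ bad2 ∪ bad3 := by
        by_contra hcon
        push_neg at hcon
        have hsub : (univ : Finset (Fin m)) ⊆ bad1 ∪ bad2 ∪ bad3 := fun i _ => hcon i
        have hcard := Finset.card_le_card hsub
        rw [Finset.card_univ, Fintype.card_fin] at hcard
        have h2 := Finset.card_union_le (bad1 ∪ bad2) bad3
        have h3 := Finset.card_union_le bad1 bad2
        have h4 : m ≤ bad1.card + bad2.card + bad3.card := by omega
        have h5 : (m:ℝ) ≤ (bad1.card : ℝ) + bad2.card + bad3.card := by exact_mod_cast h4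
        linarith
      rw [Finset.mem_union, Finset.mem_union] at hi₀
      push_neg at hi₀
      obtain ⟨⟨hi₀1, hi₀2⟩, hi₀3⟩ := hi₀
      have hi1 : Q i₀ j = none := by
        by_contra h
        exact hi₀1 (Finset.mem_filter.2 ⟨Finset.mem_univ _, h⟩)
      have hi2 : ∀ j', Q i₀ j' ≠ some k := by
        intro j' h
        exact hi₀2 (Finset.mem_filter.2 ⟨Finset.mem_univ _, ⟨j', h⟩⟩)
      have hi3 : (rowN Q i₀ : ℝ) ≤ 3*(δ+ε)*n - 1 := by
        by_contra h
        push_neg at h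
        exact hi₀3 (Finset.mem_filter.2 ⟨Finset.mem_univ _, h⟩)
      set Q' : Fin m → Fin n → Option (Fin n) :=
        fun i' j' => if i' = i₀ ∧ j' = j then some k else Q i' j' with hQ'def
      have hnew : Q' i₀ j = some k := by simp [hQ'def]
      have hold : ∀ i' j', ¬(i' = i₀ ∧ j' = j) → Q' i' j' = Q i' j' := by
        intro i' j' h
        simp only [hQ'def]
        rw [if_neg h]
      have hext : ∀ i' j' k', Q i' j' = some k' → Q' i' j' = some k' := by
        intro i' j' k' h
        by_cases hc : i' = i₀ ∧ j' = j
        · obtain ⟨rfl, rfl⟩ := hc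
          rw [hi1] at h
          exact absurd h (by simp)
        · rw [hold _ _ hc]; exact h
      have hQ'row : ∀ i j₁ j₂ k', Q' i j₁ = some k' → Q' i j₂ = some k' → j₁ = j₂ := by
        intro i j₁ j₂ k' h₁ h₂
        by_cases c₁ : i = i₀ ∧ j₁ = j <;> by_cases c₂ : i = i₀ ∧ j₂ = j
        · exact c₁.2.trans c₂.2.symm
        · exfalso
          obtain ⟨rfl, rfl⟩ := c₁
          rw [hnew] at h₁
          rw [hold _ _ c₂] at h₂
          rw [← Option.some.inj h₁] at h₂
          exact hi2 j₂ h₂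
        · exfalso
          obtain ⟨rfl, rfl⟩ := c₂
          rw [hnew] at h₂
          rw [hold _ _ c₁] at h₁
          rw [← Option.some.inj h₂] at h₁
          exact hi2 j₁ h₁
        · rw [hold _ _ c₁] at h₁
          rw [hold _ _ c₂] at h₂
          exact hQrow i j₁ j₂ k' h₁ h₂
      have hQ'col : ∀ i₁ i₂ j' k', Q' i₁ j' = some k' → Q' i₂ j' = some k' → i₁ = i₂ := by
        intro i₁ i₂ j' k' h₁ h₂
        by_cases c₁ : i₁ = i₀ ∧ j' = j <;> by_cases c₂ : i₂ = i₀ ∧ j' = j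
        · exact c₁.1.trans c₂.1.symm
        · exfalso
          obtain ⟨rfl, rfl⟩ := c₁
          rw [hnew] at h₁
          rw [hold _ _ c₂] at h₂
          rw [← Option.some.inj h₁] at h₂
          exact hex ⟨i₂, h₂⟩
        · exfalso
          obtain ⟨rfl, rfl⟩ := c₂
          rw [hnew] at h₂
          rw [hold _ _ c₁] at h₁
          rw [← Option.some.inj h₂] at h₁
          exact hex ⟨i₁, h₁⟩
        · rw [hold _ _ c₁] at h₁
          rw [hold _ _ c₂] at h₂
          exact hQcol i₁ i₂ j' k' h₁ h₂
      have hcolj : colN Q' j = colN Q j + 1 := by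
        apply filter_card_succ _ _ i₀
        · intro x hx
          rw [hold x j (fun h => hx h.1)]
        · rw [hnew]; simp
        · simp [hi1]
      have hcolother : ∀ j', j' ≠ j → colN Q' j' = colN Q j' := by
        intro j' hj'
        unfold colN
        congr 1
        apply Finset.filter_congr
        intro i _
        rw [hold i j' (fun h => hj' h.2)]
      have hrowi₀ : rowN Q' i₀ = rowN Q i₀ + 1 := by
        apply filter_card_succ _ _ j
        · intro x hx
          rw [hold i₀ x (fun h => hx h.2)]
        · rw [hnew]; simp
        · simp [hi1]
      have hrowother : ∀ i, i ≠ i₀ → rowN Q' i = rowN Q i := by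
        intro i hi
        unfold rowN
        congr 1
        apply Finset.filter_congr
        intro j' _
        rw [hold i j' (fun h => hi h.1)]
      have hsymk : symN Q' k = symN Q k + 1 := by
        apply filter_card_succ _ _ ((i₀, j) : Fin m × Fin n)
        · intro x hx
          have hnc : ¬(x.1 = i₀ ∧ x.2 = j) := by
            rintro ⟨ha, hb⟩
            exact hx (Prod.ext ha hb)
          rw [hold x.1 x.2 hnc]
        · exact hnew
        · rw [hi1]; simp
      have hsymother : ∀ k', k' ≠ k → symN Q' k' = symN Q k' := by
        intro k' hk'
        unfold symN
        congr 1
        apply Finset.filter_congr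
        intro x _
        by_cases hc : x.1 = i₀ ∧ x.2 = j
        · obtain ⟨h1, h2⟩ := hc
          rw [h1, h2, hnew, hi1]
          simp [Ne.symm hk']
        · rw [hold _ _ hc]
      have Hcol' : ∀ j', (colN Q' j' : ℝ) + cntj tl j' ≤ ε * m + (A j').card := by
        intro j'
        by_cases hj' : j' = j
        · subst hj'
          have h1 := Hcol j'
          have h2 : cntj ((j',k)::tl) j' = cntj tl j' + 1 := by
            rw [cntj_cons]; simp
          rw [h2] at h1
          rw [hcolj]
          push_cast at h1 ⊢
          linarith
        · have h1 := Hcol j'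
          have h2 : cntj tl j' ≤ cntj ((j,k)::tl) j' := by rw [cntj_cons]; omega
          have h2' : (cntj tl j' : ℝ) ≤ (cntj ((j,k)::tl) j' : ℝ) := by exact_mod_cast h2
          rw [hcolother j' hj']
          linarith
      have Hsym' : ∀ k', (symN Q' k' : ℝ) + cntk tl k' ≤
          ε * m + (univ.filter fun j' => k' ∈ A j').card := by
        intro k'
        by_cases hk' : k' = k
        · subst hk'
          have h1 := Hsym k'
          have h2 : cntk ((j,k')::tl) k' = cntk tl k' + 1 := by
            rw [cntk_cons]; simp
          rw [h2] at h1
          rw [hsymk]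
          push_cast at h1 ⊢
          linarith
        · have h1 := Hsym k'
          have h2 : cntk tl k' ≤ cntk ((j,k)::tl) k' := by rw [cntk_cons]; omega
          have h2' : (cntk tl k' : ℝ) ≤ (cntk ((j,k)::tl) k' : ℝ) := by exact_mod_cast h2
          rw [hsymother k' hk']
          linarith
      have Hrow' : ∀ i, (rowN Q' i : ℝ) ≤ 3 * (δ + ε) * n := by
        intro i
        by_cases hi : i = i₀
        · subst hi
          rw [hrowi₀]
          push_cast
          linarith
        · rw [hrowother i hi]
          exact Hrow i
      obtain ⟨Q'', a1, a2, a3, a4, a5, a6, a7⟩ := ih hLtl Q' hQ'row hQ'col Hcol' Hsym' Hrow'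
      refine ⟨Q'', a1, a2, fun i' j' k' h => a3 _ _ _ (hext _ _ _ h), a4, a5, a6, ?_⟩
      intro p hp
      rcases List.mem_cons.1 hp with rfl | h
      · exact ⟨i₀, a3 _ _ _ hnew⟩
      · exact a7 p h

theorem latin_rectangle_extension (m n : ℕ) (hmn : m ≤ n) (ε δ : ℝ)
    (hε : 0 < ε) (hε' : ε < 1 / 6) (hδ : 0 < δ) (hδ' : δ < 1 / 6)
    (P : Fin m → Fin n → Option (Fin n))
    -- `P` is a partial latin rectangle
    (hProw : ∀ i j₁ j₂ k, P i j₁ = some k → P i j₂ = some k → j₁ = j₂)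
    (hPcol : ∀ i₁ i₂ j k, P i₁ j = some k → P i₂ j = some k → i₁ = i₂)
    -- `P` is ε-dense
    (hProwd : ∀ i, ((Finset.univ.filter fun j => P i j ≠ none).card : ℝ) ≤ ε * n)
    (hPcold : ∀ j, ((Finset.univ.filter fun i => P i j ≠ none).card : ℝ) ≤ ε * m)
    (hPsymd : ∀ k, ((Finset.univ.filter fun p : Fin m × Fin n =>
        P p.1 p.2 = some k).card : ℝ) ≤ ε * m)
    (A : Fin n → Finset (Fin n))
    (hA : ∀ j, ((A j).card : ℝ) < δ * m)
    (hA' : ∀ k, ((Finset.univ.filter fun j => k ∈ A j).card : ℝ) < δ * m) :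
    ∃ P' : Fin m → Fin n → Option (Fin n),
      -- `P'` is a partial latin rectangle
      (∀ i j₁ j₂ k, P' i j₁ = some k → P' i j₂ = some k → j₁ = j₂) ∧
      (∀ i₁ i₂ j k, P' i₁ j = some k → P' i₂ j = some k → i₁ = i₂) ∧
      -- `P'` contains `P`
      (∀ i j k, P i j = some k → P' i j = some k) ∧
      -- `P'` is `3(δ+ε)`-dense
      (∀ i, ((Finset.univ.filter fun j => P' i j ≠ none).card : ℝ) ≤ 3 * (δ + ε) * n) ∧
      (∀ j, ((Finset.univ.filter fun i => P' i j ≠ none).card : ℝ) ≤ 3 * (δ + ε) * m) ∧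
      (∀ k, ((Finset.univ.filter fun p : Fin m × Fin n =>
          P' p.1 p.2 = some k).card : ℝ) ≤ 3 * (δ + ε) * m) ∧
      -- column `j` of `P'` contains the elements of `A j`
      (∀ j, ∀ k ∈ A j, ∃ i, P' i j = some k) := by
  classical
  set L₀ : List (Fin n × Fin n) :=
    ((univ : Finset (Fin n × Fin n)).filter fun p => p.2 ∈ A p.1).toList with hL₀
  have hmemL₀ : ∀ p : Fin n × Fin n, p ∈ L₀ ↔ p.2 ∈ A p.1 := by
    intro p
    rw [hL₀, Finset.mem_toList, Finset.mem_filter]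
    simp
  have hcntj : ∀ j, cntj L₀ j = (A j).card := by
    intro j
    rw [cntj, hL₀, countP_toList, Finset.filter_filter]
    apply Finset.card_bij (fun (p : Fin n × Fin n) _ => p.2)
    · intro p hp
      simp only [Finset.mem_filter] at hp
      obtain ⟨-, h1, h2⟩ := hp
      rwa [h2] at h1
    · intro p hp q hq hpq
      simp only [Finset.mem_filter] at hp hq
      exact Prod.ext (hp.2.2.trans hq.2.2.symm) hpq
    · intro k hk
      exact ⟨(j, k), by simp [hk], rfl⟩
  have hcntk : ∀ k, cntk L₀ k = (univ.filter fun j => k ∈ A j).card := by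
    intro k
    rw [cntk, hL₀, countP_toList, Finset.filter_filter]
    apply Finset.card_bij (fun (p : Fin n × Fin n) _ => p.1)
    · intro p hp
      simp only [Finset.mem_filter] at hp ⊢
      obtain ⟨-, h1, h2⟩ := hp
      exact ⟨Finset.mem_univ _, h2 ▸ h1⟩
    · intro p hp q hq hpq
      simp only [Finset.mem_filter] at hp hq
      exact Prod.ext hpq (hp.2.2.trans hq.2.2.symm)
    · intro j hj
      simp only [Finset.mem_filter] at hj
      exact ⟨(j, k), by simp [hj.2], rfl⟩
  obtain ⟨Q', h1, h2, h3, h4, h5, h6, h7⟩ :=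
    latin_aux m n hmn ε δ hε hε' hδ hδ' A hA hA' L₀
      (fun p hp => (hmemL₀ p).1 hp) P hProw hPcol
      (fun j => by rw [hcntj j]; exact add_le_add (hPcold j) le_rfl)
      (fun k => by rw [hcntk k]; exact add_le_add (hPsymd k) le_rfl)
      (fun i => by
        refine (hProwd i).trans ?_
        have hn0 : (0 : ℝ) ≤ (n : ℝ) := Nat.cast_nonneg n
        nlinarith)
  refine ⟨Q', h1, h2, h3, h4, h5, h6, fun j k hk => ?_⟩
  exact h7 (j, k) ((hmemL₀ (j, k)).2 hk)
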